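/- Let X be a real Hilbert space and A a maximal monotone operator on X. If u, û : [0, +∞) → X are two Lipschitz continuous functions such that u(t) ∈ D(A) and û(t) ∈ D(A) for all t ≥ 0, and -u'(t) ∈ A(u(t)) and -û'(t) ∈ A(û(t)) for almost every t > 0, then ‖u(t) - û(t)‖ ≤ ‖u(0) - û(0)‖ for all t ≥ 0. In particular, the solution of the Cauchy problem -u'(t) ∈ A(u(t)), u(0) = u₀, is unique. -/

import Mathlib

open scoped InnerProductSpace

open MeasureTheory Filter Set Topology

/-- A multivalued operator `A : X → 𝒫(X)` is monotone if
`⟪v₁ - v₂, x₁ - x₂⟫ ≥ 0` whenever `v₁ ∈ A x₁`, `v₂ ∈ A x₂`. -/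
def IsMonotoneOperator {X : Type*} [NormedAddCommGroup X] [InnerProductSpace ℝ X]
    (A : X → Set X) : Prop :=
  ∀ x₁ x₂ v₁ v₂, v₁ ∈ A x₁ → v₂ ∈ A x₂ → 0 ≤ ⟪v₁ - v₂, x₁ - x₂⟫_ℝ

/-- A monotone operator is maximal monotone if its graph is not properly contained
in the graph of any other monotone operator. -/
def IsMaximalMonotoneOperator {X : Type*} [NormedAddCommGroup X] [InnerProductSpace ℝ X]
    (A : X → Set X) : Prop :=
  IsMonotoneOperator A ∧
    ∀ B : X → Set X, IsMonotoneOperator B → (∀ x, A x ⊆ B x) → B = A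

/-- Difference quotients along the sequence `1/(n+1)` converge to the derivative. -/
private lemma tendsto_seq_slope {F : ℝ → ℝ} {c w : ℝ} (hF : HasDerivAt F w c) :
    Tendsto (fun n : ℕ => (F (c + 1 / (n + 1)) - F c) * (n + 1)) atTop (𝓝 w) := by
  have hs := hasDerivAt_iff_tendsto_slope.mp hF
  have h1 : Tendsto (fun n : ℕ => c + 1 / (n + 1 : ℝ)) atTop (𝓝[≠] c) := by
    apply tendsto_nhdsWithin_of_tendsto_nhds_of_eventually_within
    · have := tendsto_one_div_add_atTop_nhds_zero_nat.const_add c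
      simpa using this
    · filter_upwards with n
      have h0 : (0:ℝ) < 1 / (n + 1) := by positivity
      simp only [mem_compl_iff, mem_singleton_iff]
      intro h
      nlinarith [congrArg (fun x => x - c) h]
  have h2 := hs.comp h1
  refine h2.congr fun n => ?_
  have h0 : (0:ℝ) < (n : ℝ) + 1 := by positivity
  simp only [Function.comp, slope_def_field, add_sub_cancel_left]
  rw [div_div_eq_mul_div, div_one]

/-- Key real-analysis lemma: a continuous function with bounded difference
quotients on a neighborhood of `[a,b]` whose derivative exists and is nonpositive
almost everywhere on `(a,b)` satisfies `g b ≤ g a`. -/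
private lemma le_of_ae_deriv_nonpos {g : ℝ → ℝ} (hg : Continuous g) {a b C : ℝ}
    (hab : a ≤ b)
    (hC : ∀ x ∈ Set.Icc a (b + 1), ∀ h : ℝ, 0 < h → h ≤ 1 → |g (x + h) - g x| ≤ C * h)
    (hd : ∀ᵐ t ∂(volume.restrict (Set.Ioo a b)),
      ∃ w, HasDerivAt g w t ∧ w ≤ 0) :
    g b ≤ g a := by
  set μ := volume.restrict (Set.Ioo a b) with hμ
  -- a choice of a.e. derivative
  classical
  set f : ℝ → ℝ := fun x =>
    if hx : ∃ w, HasDerivAt g w x ∧ w ≤ 0 then hx.choose else 0 with hf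
  -- difference quotients
  set q : ℕ → ℝ → ℝ := fun n x => (g (x + 1 / (n + 1)) - g x) * (n + 1) with hq
  have hgi : ∀ c d : ℝ, IntervalIntegrable g volume c d := fun c d =>
    hg.intervalIntegrable c d
  -- a.e. pointwise convergence of the quotients to `f`, and `f ≤ 0` a.e.
  have h_ae : ∀ᵐ x ∂μ, Tendsto (fun n => q n x) atTop (𝓝 (f x)) ∧ f x ≤ 0 := by
    filter_upwards [hd] with x hx
    have hfx : HasDerivAt g (f x) x ∧ f x ≤ 0 := by
      rw [hf]; simp only [dif_pos hx]; exact hx.choose_spec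
    exact ⟨tendsto_seq_slope hfx.1, hfx.2⟩
  -- uniform bound for the quotients
  have h_bound : ∀ n : ℕ, ∀ᵐ x ∂μ, ‖q n x‖ ≤ C := by
    intro n
    filter_upwards [ae_restrict_mem measurableSet_Ioo] with x hx
    have h0 : (0:ℝ) < 1 / ((n : ℝ) + 1) := by positivity
    have h1 : (1:ℝ) / ((n : ℝ) + 1) ≤ 1 := by
      rw [div_le_one (by positivity)]; linarith [Nat.cast_nonneg (α := ℝ) n]
    have hxm : x ∈ Set.Icc a (b + 1) := ⟨hx.1.le, by linarith [hx.2.le]⟩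
    have := hC x hxm (1 / (n + 1)) h0 h1
    have hnp : (0:ℝ) < (n : ℝ) + 1 := by positivity
    rw [hq]
    simp only [Real.norm_eq_abs, abs_mul]
    calc |g (x + 1 / (n + 1)) - g x| * |(n : ℝ) + 1|
        = |g (x + 1 / (n + 1)) - g x| * ((n : ℝ) + 1) := by
          rw [abs_of_pos hnp]
      _ ≤ (C * (1 / (n + 1))) * ((n : ℝ) + 1) := by
          exact mul_le_mul_of_nonneg_right this hnp.le
      _ = C := by field_simp
  -- measurability
  have h_meas : ∀ n : ℕ, AEStronglyMeasurable (q n) μ := by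
    intro n
    exact (((hg.comp (continuous_id.add continuous_const)).sub hg).mul
      continuous_const).aestronglyMeasurable
  -- the constant bound is integrable on the finite-measure set
  have h_int : Integrable (fun _ : ℝ => C) μ := by
    rw [hμ, MeasureTheory.integrable_const_iff]
    right
    exact inferInstance
  -- dominated convergence
  have h_dct := MeasureTheory.tendsto_integral_of_dominated_convergence
    (fun _ => C) h_meas h_int h_bound
    (h_ae.mono fun x hx => hx.1)
  -- compute the integral of the quotients
  have h_val : ∀ n : ℕ, ∫ x, q n x ∂μ
      = ((∫ x in b..(b + 1 / (n + 1)), g x) - ∫ x in a..(a + 1 / (n + 1)), g x)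
        * ((n : ℝ) + 1) := by
    intro n
    set h : ℝ := 1 / ((n : ℝ) + 1) with hh
    have h0 : (0:ℝ) < h := by positivity
    have e1 : ∫ x, q n x ∂μ
        = ((∫ x in Set.Ioo a b, g (x + h)) - ∫ x in Set.Ioo a b, g x) * ((n : ℝ) + 1) := by
      rw [hμ, hq]
      rw [MeasureTheory.integral_mul_const]
      congr 1
      apply MeasureTheory.integral_sub
      · exact ((hg.comp (continuous_id.add continuous_const)).integrableOn_Ioc).mono_set
          Set.Ioo_subset_Ioc_self
      · exact (hg.integrableOn_Ioc).mono_set Set.Ioo_subset_Ioc_self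
    have e2 : ∫ x in Set.Ioo a b, g (x + h) = ∫ x in a..b, g (x + h) := by
      rw [intervalIntegral.integral_of_le hab, MeasureTheory.integral_Ioc_eq_integral_Ioo]
    have e3 : ∫ x in Set.Ioo a b, g x = ∫ x in a..b, g x := by
      rw [intervalIntegral.integral_of_le hab, MeasureTheory.integral_Ioc_eq_integral_Ioo]
    have e4 : ∫ x in a..b, g (x + h) = ∫ x in (a+h)..(b+h), g x :=
      intervalIntegral.integral_comp_add_right g h
    have e5 : (∫ x in a..(a+h), g x) + ∫ x in (a+h)..(b+h), g x = ∫ x in a..(b+h), g x :=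
      intervalIntegral.integral_add_adjacent_intervals (hgi _ _) (hgi _ _)
    have e6 : (∫ x in a..b, g x) + ∫ x in b..(b+h), g x = ∫ x in a..(b+h), g x :=
      intervalIntegral.integral_add_adjacent_intervals (hgi _ _) (hgi _ _)
    rw [e1, e2, e3, e4]
    have : (∫ x in (a+h)..(b+h), g x) - ∫ x in a..b, g x
        = (∫ x in b..(b+h), g x) - ∫ x in a..(a+h), g x := by linarith
    rw [this]
  -- the other limit : `g b - g a`
  have h_lim2 : Tendsto (fun n : ℕ => ∫ x, q n x ∂μ) atTop (𝓝 (g b - g a)) := by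
    have hFb : HasDerivAt (fun y => ∫ x in b..y, g x) (g b) b :=
      intervalIntegral.integral_hasDerivAt_right (hgi b b)
        (hg.stronglyMeasurable.stronglyMeasurableAtFilter) hg.continuousAt
    have hFa : HasDerivAt (fun y => ∫ x in a..y, g x) (g a) a :=
      intervalIntegral.integral_hasDerivAt_right (hgi a a)
        (hg.stronglyMeasurable.stronglyMeasurableAtFilter) hg.continuousAt
    have tb := tendsto_seq_slope hFb
    have ta := tendsto_seq_slope hFa
    simp only [intervalIntegral.integral_same, sub_zero] at tb ta
    have := tb.sub ta
    refine this.congr fun n => ?_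
    rw [h_val n]; ring
  -- conclude
  have h_eq : ∫ x, f x ∂μ = g b - g a := tendsto_nhds_unique h_dct h_lim2
  have h_nonpos : ∫ x, f x ∂μ ≤ 0 :=
    MeasureTheory.integral_nonpos_of_ae (h_ae.mono fun x hx => hx.2)
  linarith [h_eq ▸ h_nonpos]

/-- Contraction property of the flow of a maximal monotone operator: two Lipschitz
solutions of `-u'(t) ∈ A(u(t))` on `[0,∞)` satisfy `‖u(t) - û(t)‖ ≤ ‖u(0) - û(0)‖`. -/
theorem maximal_monotone_flow_contraction
    {X : Type*} [NormedAddCommGroup X] [InnerProductSpace ℝ X] [CompleteSpace X]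
    (A : X → Set X) (hA : IsMaximalMonotoneOperator A)
    (u v : ℝ → X)
    (hu_lip : ∃ L : NNReal, LipschitzOnWith L u (Set.Ici (0 : ℝ)))
    (hv_lip : ∃ L : NNReal, LipschitzOnWith L v (Set.Ici (0 : ℝ)))
    (hu_dom : ∀ t : ℝ, 0 ≤ t → (A (u t)).Nonempty)
    (hv_dom : ∀ t : ℝ, 0 ≤ t → (A (v t)).Nonempty)
    (hu_flow : ∀ᵐ t ∂(MeasureTheory.volume.restrict (Set.Ioi (0 : ℝ))),
      ∃ w : X, HasDerivAt u w t ∧ -w ∈ A (u t))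
    (hv_flow : ∀ᵐ t ∂(MeasureTheory.volume.restrict (Set.Ioi (0 : ℝ))),
      ∃ w : X, HasDerivAt v w t ∧ -w ∈ A (v t)) :
    ∀ t : ℝ, 0 ≤ t → ‖u t - v t‖ ≤ ‖u 0 - v 0‖ := by
  obtain ⟨Lu, hu⟩ := hu_lip
  obtain ⟨Lv, hv⟩ := hv_lip
  -- extend `u`, `v` to all of `ℝ` via the projection `x ↦ max x 0`
  set p : ℝ → ℝ := fun x => max x 0 with hp
  have hpl : LipschitzWith 1 p := LipschitzWith.id.max_const 0
  have hU : LipschitzWith Lu (u ∘ p) := fun x y => by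
    calc edist (u (p x)) (u (p y)) ≤ Lu * edist (p x) (p y) :=
          hu (le_max_right x 0) (le_max_right y 0)
      _ ≤ Lu * (1 * edist x y) := by gcongr; exact hpl x y
      _ = Lu * edist x y := by rw [one_mul]
  have hV : LipschitzWith Lv (v ∘ p) := fun x y => by
    calc edist (v (p x)) (v (p y)) ≤ Lv * edist (p x) (p y) :=
          hv (le_max_right x 0) (le_max_right y 0)
      _ ≤ Lv * (1 * edist x y) := by gcongr; exact hpl x y
      _ = Lv * edist x y := by rw [one_mul]
  set U : ℝ → X := u ∘ p with hUdef
  set V : ℝ → X := v ∘ p with hVdef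
  set L : ℝ := (Lu : ℝ) + (Lv : ℝ) with hL
  have hLnn : 0 ≤ L := by positivity
  -- `f := U - V` is `L`-Lipschitz
  have hf_lip : ∀ x y : ℝ, ‖(U x - V x) - (U y - V y)‖ ≤ L * |x - y| := by
    intro x y
    have h1 : ‖U x - U y‖ ≤ (Lu : ℝ) * |x - y| := by
      have := hU.dist_le_mul x y
      rwa [dist_eq_norm, Real.dist_eq] at this
    have h2 : ‖V x - V y‖ ≤ (Lv : ℝ) * |x - y| := by
      have := hV.dist_le_mul x y
      rwa [dist_eq_norm, Real.dist_eq] at this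
    calc ‖(U x - V x) - (U y - V y)‖ = ‖(U x - U y) - (V x - V y)‖ := by rw [show (U x - V x) - (U y - V y) = (U x - U y) - (V x - V y) from by abel]
      _ ≤ ‖U x - U y‖ + ‖V x - V y‖ := norm_sub_le _ _
      _ ≤ (Lu : ℝ) * |x - y| + (Lv : ℝ) * |x - y| := add_le_add h1 h2
      _ = L * |x - y| := by ring
  set g : ℝ → ℝ := fun x => ⟪U x - V x, U x - V x⟫_ℝ with hg
  have hUc : Continuous U := hU.continuous
  have hVc : Continuous V := hV.continuous
  have hgc : Continuous g := (hUc.sub hVc).inner (hUc.sub hVc)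
  -- the a.e. derivative of `g` is nonpositive on `(0, ∞)`
  have hae : ∀ᵐ t ∂(MeasureTheory.volume.restrict (Set.Ioi (0:ℝ))),
      ∃ w, HasDerivAt g w t ∧ w ≤ 0 := by
    filter_upwards [hu_flow, hv_flow, ae_restrict_mem measurableSet_Ioi]
      with t hut hvt ht
    obtain ⟨w, hw, hwA⟩ := hut
    obtain ⟨z, hz, hzA⟩ := hvt
    have hmem : Set.Ioi (0:ℝ) ∈ 𝓝 t := Ioi_mem_nhds ht
    have hUu : U =ᶠ[𝓝 t] u := by
      filter_upwards [hmem] with s hs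
      simp [hUdef, hp, max_eq_left (le_of_lt (Set.mem_Ioi.mp hs))]
    have hVv : V =ᶠ[𝓝 t] v := by
      filter_upwards [hmem] with s hs
      simp [hVdef, hp, max_eq_left (le_of_lt (Set.mem_Ioi.mp hs))]
    have hUd : HasDerivAt U w t := hw.congr_of_eventuallyEq hUu
    have hVd : HasDerivAt V z t := hz.congr_of_eventuallyEq hVv
    have hfd : HasDerivAt (fun x => U x - V x) (w - z) t := hUd.sub hVd
    have hgd : HasDerivAt g (⟪U t - V t, w - z⟫_ℝ + ⟪w - z, U t - V t⟫_ℝ) t :=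
      hfd.inner ℝ hfd
    refine ⟨_, hgd, ?_⟩
    have hft : U t - V t = u t - v t := by
      simp [hUdef, hVdef, hp, max_eq_left (le_of_lt (Set.mem_Ioi.mp ht))]
    have hmono := hA.1 (u t) (v t) (-w) (-z) hwA hzA
    have hneg : -w - -z = -(w - z) := by abel
    rw [hneg, inner_neg_left] at hmono
    have h1 : ⟪w - z, U t - V t⟫_ℝ ≤ 0 := by rw [hft]; linarith
    have h2 : ⟪U t - V t, w - z⟫_ℝ = ⟪w - z, U t - V t⟫_ℝ := real_inner_comm _ _
    linarith
  intro t ht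
  -- apply the key lemma on `[0, t]`
  set M : ℝ := ‖U 0 - V 0‖ + L * (t + 2) with hM
  have hMnn : 0 ≤ M := by positivity
  have hbd : ∀ y : ℝ, 0 ≤ y → y ≤ t + 2 → ‖U y - V y‖ ≤ M := by
    intro y hy0 hy2
    have := hf_lip y 0
    have habs : |y - 0| ≤ t + 2 := by rw [sub_zero, abs_of_nonneg hy0]; exact hy2
    calc ‖U y - V y‖ ≤ ‖U 0 - V 0‖ + ‖(U y - V y) - (U 0 - V 0)‖ := by
          nlinarith [norm_sub_norm_le (U y - V y) (U 0 - V 0),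
            abs_norm (U y - V y)]
      _ ≤ ‖U 0 - V 0‖ + L * |y - 0| := by linarith
      _ ≤ M := by rw [hM]; nlinarith
  have hC : ∀ x ∈ Set.Icc (0:ℝ) (t + 1), ∀ h : ℝ, 0 < h → h ≤ 1 →
      |g (x + h) - g x| ≤ (2 * M * L) * h := by
    intro x hx h h0 h1
    have hx1 : ‖U (x + h) - V (x + h)‖ ≤ M := hbd _ (by linarith [hx.1]) (by linarith [hx.2])
    have hx2 : ‖U x - V x‖ ≤ M := hbd _ hx.1 (by linarith [hx.2])
    have hq : ‖(U (x+h) - V (x+h)) - (U x - V x)‖ ≤ L * h := by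
      have := hf_lip (x + h) x
      rwa [add_sub_cancel_left, abs_of_pos h0] at this
    have e1 : g (x + h) = ‖U (x+h) - V (x+h)‖ ^ 2 := real_inner_self_eq_norm_sq _
    have e2 : g x = ‖U x - V x‖ ^ 2 := real_inner_self_eq_norm_sq _
    rw [e1, e2]
    have hdiff : |‖U (x+h) - V (x+h)‖ - ‖U x - V x‖| ≤ L * h :=
      le_trans (abs_norm_sub_norm_le _ _) hq
    have hnn1 : (0:ℝ) ≤ ‖U (x+h) - V (x+h)‖ := norm_nonneg _
    have hnn2 : (0:ℝ) ≤ ‖U x - V x‖ := norm_nonneg _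
    rw [sq_sub_sq, abs_mul]
    calc |‖U (x+h) - V (x+h)‖ + ‖U x - V x‖| * |‖U (x+h) - V (x+h)‖ - ‖U x - V x‖|
        ≤ (2 * M) * (L * h) := by
          apply mul_le_mul _ hdiff (abs_nonneg _) (by positivity)
          rw [abs_of_nonneg (by positivity)]; linarith
      _ = (2 * M * L) * h := by ring
  have hdsub : ∀ᵐ s ∂(MeasureTheory.volume.restrict (Set.Ioo (0:ℝ) t)),
      ∃ w, HasDerivAt g w s ∧ w ≤ 0 :=
    ae_restrict_of_ae_restrict_of_subset Set.Ioo_subset_Ioi_self hae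
  have hkey : g t ≤ g 0 := le_of_ae_deriv_nonpos hgc ht hC hdsub
  have e0 : U 0 - V 0 = u 0 - v 0 := by simp [hUdef, hVdef, hp]
  have et : U t - V t = u t - v t := by simp [hUdef, hVdef, hp, max_eq_left ht]
  have h1 : ‖u t - v t‖ ^ 2 ≤ ‖u 0 - v 0‖ ^ 2 := by
    have e1 : g t = ‖u t - v t‖ ^ 2 := by
      simp only [hg]; rw [et]; exact real_inner_self_eq_norm_sq _
    have e2 : g 0 = ‖u 0 - v 0‖ ^ 2 := by
      simp only [hg]; rw [e0]; exact real_inner_self_eq_norm_sq _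
    linarith [e1 ▸ e2 ▸ hkey]
  nlinarith [norm_nonneg (u t - v t), norm_nonneg (u 0 - v 0)]
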